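/- Suppose (η^{AC}, u^{AC}) is feasible to the average-cost LP, (η^S, u^S) is feasible with slack ζ := inf_{s ∈ S, a ∈ A_s} { c(s,a) − η^S T(s,a) − u^S(s) + u^S(f(s,a)) } > 0, and û : S → ℝ is bounded with sup_{s∈S} |u^{AC}(s) − û(s)| ≤ ε for some ε > 0. Then (η^{AC}, û) is 2ε-feasible, and there exists a feasible pair (η̂, ũ) such that |η^{AC} − η̂| ≤ (2ε/(ζ+2ε)) |η^{AC} − η^S| and sup_{s∈S} |u^{AC}(s) − ũ(s)| ≤ ε + (2ε/(ζ+2ε)) ( ε + sup_{s∈S} |u^{AC}(s) − u^S(s)| ). -/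

import Mathlib

/-- If `(η^{AC}, u^{AC})` is feasible to the average-cost LP, `(η^S, u^S)`
is a Slater point with slack `ζ > 0`, and `û` is bounded with `sup_s |u^{AC} s − û s| ≤ ε`,
then `(η^{AC}, û)` is `2ε`-feasible, and there is a feasible pair `(η̂, ũ)` with
`|η^{AC} − η̂| ≤ (2ε/(ζ+2ε))|η^{AC} − η^S|` and
`sup_s |u^{AC} s − ũ s| ≤ ε + (2ε/(ζ+2ε))(ε + sup_s |u^{AC} s − u^S s|)`. -/
theorem stmt_16
    {S A : Type*} [Nonempty S]
    (Act : S → Set A) (hAct : ∀ s, (Act s).Nonempty)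
    (c : S → A → ℝ) (T : S → A → ℝ) (hT : ∀ s, ∀ a ∈ Act s, 0 < T s a)
    (f : S → A → S)
    (ηAC : ℝ) (uAC : S → ℝ) (huAC_bdd : ∃ M, ∀ s, |uAC s| ≤ M)
    (hAC_feas : ∀ s : S, ∀ a ∈ Act s, ηAC * T s a + uAC s - uAC (f s a) ≤ c s a)
    (ηS : ℝ) (uS : S → ℝ) (huS_bdd : ∃ M, ∀ s, |uS s| ≤ M)
    (hS_feas : ∀ s : S, ∀ a ∈ Act s, ηS * T s a + uS s - uS (f s a) ≤ c s a)
    (ζ : ℝ)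
    (hζ : ζ = sInf {x : ℝ | ∃ s : S, ∃ a ∈ Act s,
      x = c s a - ηS * T s a - uS s + uS (f s a)})
    (hζ_pos : 0 < ζ)
    (ε : ℝ) (hε : 0 < ε)
    (uhat : S → ℝ) (huhat_bdd : ∃ M, ∀ s, |uhat s| ≤ M)
    (hclose : ∀ s : S, |uAC s - uhat s| ≤ ε) :
    (∀ s : S, ∀ a ∈ Act s, ηAC * T s a + uhat s - uhat (f s a) ≤ c s a + 2 * ε) ∧
      ∃ (ηtil : ℝ) (util : S → ℝ), (∃ M, ∀ s, |util s| ≤ M) ∧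
        (∀ s : S, ∀ a ∈ Act s, ηtil * T s a + util s - util (f s a) ≤ c s a) ∧
        |ηAC - ηtil| ≤ 2 * ε / (ζ + 2 * ε) * |ηAC - ηS| ∧
        ∀ s : S, |uAC s - util s|
          ≤ ε + 2 * ε / (ζ + 2 * ε) * (ε + ⨆ s' : S, |uAC s' - uS s'|) := by
  set θ := 2 * ε / (ζ + 2 * ε) with hθdef
  have hden : 0 < ζ + 2 * ε := by linarith
  have hθ0 : 0 < θ := by positivity
  have hθ1 : θ ≤ 1 := by
    rw [hθdef, div_le_one hden]; linarith
  have hθkey : (1 - θ) * (2 * ε) = θ * ζ := by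
    have hmul : θ * (ζ + 2 * ε) = 2 * ε := by rw [hθdef]; exact div_mul_cancel₀ _ hden.ne'
    linear_combination -hmul
  -- 2ε-feasibility of (ηAC, uhat)
  have hfeas2 : ∀ s : S, ∀ a ∈ Act s,
      ηAC * T s a + uhat s - uhat (f s a) ≤ c s a + 2 * ε := by
    intro s a ha
    have h1 := abs_le.mp (hclose s)
    have h2 := abs_le.mp (hclose (f s a))
    have := hAC_feas s a ha
    linarith
  refine ⟨hfeas2, (1 - θ) * ηAC + θ * ηS,
    fun s => (1 - θ) * uhat s + θ * uS s, ?_, ?_, ?_, ?_⟩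
  · obtain ⟨M1, hM1⟩ := huhat_bdd
    obtain ⟨M2, hM2⟩ := huS_bdd
    refine ⟨(1 - θ) * M1 + θ * M2, fun s => ?_⟩
    calc |(1 - θ) * uhat s + θ * uS s| ≤ |(1 - θ) * uhat s| + |θ * uS s| := abs_add_le _ _
      _ = (1 - θ) * |uhat s| + θ * |uS s| := by
          rw [abs_mul, abs_mul, abs_of_nonneg (by linarith : (0:ℝ) ≤ 1 - θ),
            abs_of_nonneg hθ0.le]
      _ ≤ (1 - θ) * M1 + θ * M2 := by
          have := hM1 s; have := hM2 s
          have h1 : (0:ℝ) ≤ 1 - θ := by linarith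
          nlinarith
  · intro s a ha
    dsimp only
    have hζle : ζ ≤ c s a - ηS * T s a - uS s + uS (f s a) := by
      rw [hζ]
      refine csInf_le ⟨0, ?_⟩ ⟨s, a, ha, rfl⟩
      rintro x ⟨s', a', ha', rfl⟩
      have := hS_feas s' a' ha'
      linarith
    have h2 := hfeas2 s a ha
    have h1 : (0:ℝ) ≤ 1 - θ := by linarith
    nlinarith [mul_le_mul_of_nonneg_left h2 h1, mul_le_mul_of_nonneg_left hζle hθ0.le]
  · have : ηAC - ((1 - θ) * ηAC + θ * ηS) = θ * (ηAC - ηS) := by ring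
    rw [this, abs_mul, abs_of_nonneg hθ0.le]
  · intro s
    have hbdd : BddAbove (Set.range fun s' : S => |uAC s' - uS s'|) := by
      obtain ⟨M1, hM1⟩ := huAC_bdd
      obtain ⟨M2, hM2⟩ := huS_bdd
      refine ⟨M1 + M2, ?_⟩
      rintro x ⟨s', rfl⟩
      calc |uAC s' - uS s'| ≤ |uAC s'| + |uS s'| := abs_sub _ _
        _ ≤ M1 + M2 := add_le_add (hM1 s') (hM2 s')
    have hsup : |uAC s - uS s| ≤ ⨆ s' : S, |uAC s' - uS s'| :=
      le_ciSup hbdd s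
    have h1 : (0:ℝ) ≤ 1 - θ := by linarith
    have : uAC s - ((1 - θ) * uhat s + θ * uS s)
        = (1 - θ) * (uAC s - uhat s) + θ * (uAC s - uS s) := by ring
    rw [this]
    calc |(1 - θ) * (uAC s - uhat s) + θ * (uAC s - uS s)|
        ≤ |(1 - θ) * (uAC s - uhat s)| + |θ * (uAC s - uS s)| := abs_add_le _ _
      _ = (1 - θ) * |uAC s - uhat s| + θ * |uAC s - uS s| := by
          rw [abs_mul, abs_mul, abs_of_nonneg h1, abs_of_nonneg hθ0.le]
      _ ≤ ε + θ * (ε + ⨆ s' : S, |uAC s' - uS s'|) := by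
          have hc := hclose s
          nlinarith
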